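/- The class K₀ has the amalgamation property: for all A, B₁, B₂ ∈ K₀ and embeddings f₁ : A → B₁ and f₂ : A → B₂, there exist C ∈ K₀ and embeddings g₁ : B₁ → C and g₂ : B₂ → C with g₁ ∘ f₁ = g₂ ∘ f₂. -/

import Mathlib

open FirstOrder Language Structure CategoryTheory

/-- The language `L₀` with a `2n`-ary relation symbol `E_n` for each `n ≥ 1`. -/
def L₀ : FirstOrder.Language where
  Functions := fun _ => Empty
  Relations := fun k => {n : ℕ // 0 < n ∧ k = n + n}

/-- The relation symbol `E_n`. -/
def Esymb (n : ℕ) (hn : 0 < n) : L₀.Relations (n + n) := ⟨n, hn, rfl⟩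

/-- `E_n(x̄, ȳ)` in an `L₀`-structure. -/
def ERel (M : Type*) [L₀.Structure M] (n : ℕ) (hn : 0 < n) (x y : Fin n → M) : Prop :=
  Structure.RelMap (Esymb n hn) (Fin.append x y)

/-- The defining conditions for membership in `K₀`: each `E_n` holds only on pairs of
injective `n`-tuples, is invariant under permuting the entries of each tuple separately,
and induces an equivalence relation on `n`-element subsets. -/
def IsK0Struct (C : Type*) [L₀.Structure C] : Prop :=
  ∀ (n : ℕ) (hn : 0 < n),
    (∀ x y : Fin n → C, ERel C n hn x y → Function.Injective x ∧ Function.Injective y) ∧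
    (∀ (x y : Fin n → C) (σ τ : Equiv.Perm (Fin n)),
        ERel C n hn x y → ERel C n hn (x ∘ σ) (y ∘ τ)) ∧
    (∀ x : Fin n → C, Function.Injective x → ERel C n hn x x) ∧
    (∀ x y : Fin n → C, ERel C n hn x y → ERel C n hn y x) ∧
    (∀ x y z : Fin n → C, ERel C n hn x y → ERel C n hn y z → ERel C n hn x z)

/-- The class `K₀` of finite `L₀`-structures as above. -/
def K₀ : Set (Bundled L₀.Structure) := {C | Finite C ∧ IsK0Struct C}

/-! ### Auxiliary lemmas -/

lemma comp_append {α β : Type*} (f : α → β) {n : ℕ} (x y : Fin n → α) :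
    f ∘ Fin.append x y = Fin.append (f ∘ x) (f ∘ y) := by
  funext i
  refine Fin.addCases (fun j => ?_) (fun j => ?_) i
  · simp only [Function.comp_apply, Fin.append_left]
  · simp only [Function.comp_apply, Fin.append_right]

lemma ERel_map {M N : Type*} [L₀.Structure M] [L₀.Structure N] (f : M ↪[L₀] N)
    {n : ℕ} (hn : 0 < n) (x y : Fin n → M) :
    ERel N n hn (⇑f ∘ x) (⇑f ∘ y) ↔ ERel M n hn x y := by
  unfold ERel
  rw [← comp_append (⇑f) x y]
  exact f.map_rel _ _

lemma half_left {α : Type*} {n : ℕ} (x y : Fin n → α) {h : n + n = n + n} :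
    (fun i => Fin.append x y (Fin.cast h (Fin.castAdd n i))) = x := by
  funext i
  have hc : Fin.cast h (Fin.castAdd n i) = Fin.castAdd n i := rfl
  rw [hc, Fin.append_left]

lemma half_right {α : Type*} {n : ℕ} (x y : Fin n → α) {h : n + n = n + n} :
    (fun i => Fin.append x y (Fin.cast h (Fin.natAdd n i))) = y := by
  funext i
  have hc : Fin.cast h (Fin.natAdd n i) = Fin.natAdd n i := rfl
  rw [hc, Fin.append_right]

lemma append_halves {α : Type*} {n : ℕ} (x : Fin (n + n) → α) (h : n + n = n + n) :
    Fin.append (fun i => x (Fin.cast h (Fin.castAdd n i)))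
      (fun i => x (Fin.cast h (Fin.natAdd n i))) = x := by
  funext i
  refine Fin.addCases (fun j => ?_) (fun j => ?_) i
  · rw [Fin.append_left]; exact congrArg x (Fin.ext rfl)
  · rw [Fin.append_right]; exact congrArg x (Fin.ext rfl)

lemma relMap_halves {M : Type*} [L₀.Structure M] {k n : ℕ} (hn : 0 < n) (hk : k = n + n)
    (x : Fin k → M) :
    @Structure.RelMap L₀ M _ k ⟨n, hn, hk⟩ x ↔ ERel M n hn
      (fun i => x (Fin.cast hk.symm (Fin.castAdd n i)))
      (fun i => x (Fin.cast hk.symm (Fin.natAdd n i))) := by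
  subst hk
  unfold ERel
  rw [append_halves]
  rfl

lemma isK0Struct_equiv {M N : Type*} [L₀.Structure M] [L₀.Structure N]
    (e : M ≃[L₀] N) (h : IsK0Struct M) : IsK0Struct N := by
  intro n hn
  have key : ∀ x y : Fin n → N,
      ERel N n hn x y ↔ ERel M n hn (⇑e.symm ∘ x) (⇑e.symm ∘ y) := by
    intro x y
    have hx : ⇑e ∘ (⇑e.symm ∘ x) = x := by funext i; simp
    have hy : ⇑e ∘ (⇑e.symm ∘ y) = y := by funext i; simp
    conv_lhs => rw [← hx, ← hy]
    have := ERel_map e.toEmbedding hn (⇑e.symm ∘ x) (⇑e.symm ∘ y)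
    simpa using this
  obtain ⟨hinj, hperm, hrefl, hsymm, htrans⟩ := h n hn
  refine ⟨?_, ?_, ?_, ?_, ?_⟩
  · intro x y hxy
    rw [key] at hxy
    obtain ⟨h1, h2⟩ := hinj _ _ hxy
    exact ⟨(Equiv.comp_injective x e.toEquiv.symm).mp h1,
      (Equiv.comp_injective y e.toEquiv.symm).mp h2⟩
  · intro x y σ τ hxy
    rw [key] at hxy ⊢
    exact hperm _ _ σ τ hxy
  · intro x hx
    rw [key]
    exact hrefl _ ((Equiv.comp_injective x e.toEquiv.symm).mpr hx)
  · intro x y hxy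
    rw [key] at hxy ⊢
    exact hsymm _ _ hxy
  · intro x y z h1 h2
    rw [key] at h1 h2 ⊢
    exact htrans _ _ _ h1 h2

/-! ### The amalgam -/

/-- The underlying type of the free amalgam of `B1` and `B2` over `A`. -/
def Am (B1 : Type*) {A B2 : Type*} [L₀.Structure A] [L₀.Structure B2]
    (f₂ : A ↪[L₀] B2) : Type _ :=
  B1 ⊕ {b : B2 // b ∉ Set.range f₂}

section Amalg

variable {A B1 B2 : Type*} [L₀.Structure A] [L₀.Structure B1] [L₀.Structure B2]
  (f₁ : A ↪[L₀] B1) (f₂ : A ↪[L₀] B2)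

open Classical in
noncomputable def g2 : B2 → Am B1 f₂ := fun b =>
  if h : b ∈ Set.range f₂ then Sum.inl (f₁ h.choose) else Sum.inr ⟨b, h⟩

lemma g2_eq_pos {b : B2} (h : b ∈ Set.range f₂) :
    g2 f₁ f₂ b = Sum.inl (f₁ h.choose) := dif_pos h

lemma g2_eq_neg {b : B2} (h : b ∉ Set.range f₂) :
    g2 f₁ f₂ b = Sum.inr ⟨b, h⟩ := dif_neg h

lemma g2_f₂ (a : A) : g2 f₁ f₂ (f₂ a) = Sum.inl (f₁ a) := by
  have h : (f₂ a : B2) ∈ Set.range f₂ := ⟨a, rfl⟩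
  rw [g2_eq_pos f₁ f₂ h, f₂.injective h.choose_spec]

lemma g2_inl {b : B2} {c : B1} (h : g2 f₁ f₂ b = Sum.inl c) :
    ∃ a : A, b = f₂ a ∧ c = f₁ a := by
  by_cases hb : b ∈ Set.range f₂
  · rw [g2_eq_pos f₁ f₂ hb] at h
    exact ⟨hb.choose, hb.choose_spec.symm, (Sum.inl_injective h).symm⟩
  · rw [g2_eq_neg f₁ f₂ hb] at h
    exact nomatch h

lemma g2_injective : Function.Injective (g2 f₁ f₂) := by
  intro b b' hbb
  by_cases h1 : b ∈ Set.range f₂ <;> by_cases h2 : b' ∈ Set.range f₂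
  · rw [g2_eq_pos f₁ f₂ h1, g2_eq_pos f₁ f₂ h2] at hbb
    have := f₁.injective (Sum.inl_injective hbb)
    rw [← h1.choose_spec, ← h2.choose_spec, this]
  · rw [g2_eq_pos f₁ f₂ h1, g2_eq_neg f₁ f₂ h2] at hbb
    exact nomatch hbb
  · rw [g2_eq_neg f₁ f₂ h1, g2_eq_pos f₁ f₂ h2] at hbb
    exact nomatch hbb
  · rw [g2_eq_neg f₁ f₂ h1, g2_eq_neg f₁ f₂ h2] at hbb
    exact congrArg Subtype.val (Sum.inr_injective hbb)

lemma mixed_to_A {n : ℕ} {u : Fin n → B1} {v : Fin n → B2}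
    (h : Sum.inl ∘ u = g2 f₁ f₂ ∘ v) :
    ∃ a : Fin n → A, u = ⇑f₁ ∘ a ∧ v = ⇑f₂ ∘ a := by
  have h' : ∀ i, ∃ a, v i = f₂ a ∧ u i = f₁ a := by
    intro i
    obtain ⟨a, hb, hc⟩ := g2_inl f₁ f₂ (congrFun h i).symm
    exact ⟨a, hb, hc⟩
  choose a h1 h2 using h'
  exact ⟨a, funext h2, funext h1⟩

variable {n : ℕ} (hn : 0 < n)

def R1 (x y : Fin n → Am B1 f₂) : Prop :=
  ∃ u v : Fin n → B1, ERel B1 n hn u v ∧ x = Sum.inl ∘ u ∧ y = Sum.inl ∘ v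

def R2 (x y : Fin n → Am B1 f₂) : Prop :=
  ∃ u v : Fin n → B2, ERel B2 n hn u v ∧ x = g2 f₁ f₂ ∘ u ∧ y = g2 f₁ f₂ ∘ v

def SimA (x y : Fin n → Am B1 f₂) : Prop :=
  R1 f₂ hn x y ∨ R2 f₁ f₂ hn x y ∨
    (∃ w, R1 f₂ hn x w ∧ R2 f₁ f₂ hn w y) ∨
    (∃ w, R2 f₁ f₂ hn x w ∧ R1 f₂ hn w y)

def EC (x y : Fin n → Am B1 f₂) : Prop :=
  (Function.Injective x ∧ Function.Injective y) ∧
    ((∃ σ : Equiv.Perm (Fin n), y = x ∘ ⇑σ) ∨ SimA f₁ f₂ hn x y)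

variable (hA : IsK0Struct A) (hB1 : IsK0Struct B1) (hB2 : IsK0Struct B2)

include hB1 in
lemma r1_trans {x y z : Fin n → Am B1 f₂} (h1 : R1 f₂ hn x y)
    (h2 : R1 f₂ hn y z) : R1 f₂ hn x z := by
  obtain ⟨u, v, huv, rfl, rfl⟩ := id h1
  obtain ⟨u', v', hu'v', hy, rfl⟩ := id h2
  have hveq : v = u' := Sum.inl_injective.comp_left hy
  subst hveq
  exact ⟨u, v', (hB1 n hn).2.2.2.2 _ _ _ huv hu'v', rfl, rfl⟩

include hB1 in
lemma r1_symm {x y : Fin n → Am B1 f₂} (h : R1 f₂ hn x y) : R1 f₂ hn y x := by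
  obtain ⟨u, v, huv, rfl, rfl⟩ := id h
  exact ⟨v, u, (hB1 n hn).2.2.2.1 _ _ huv, rfl, rfl⟩

include hB1 in
lemma r1_perm {x y : Fin n → Am B1 f₂} (σ τ : Equiv.Perm (Fin n))
    (h : R1 f₂ hn x y) : R1 f₂ hn (x ∘ ⇑σ) (y ∘ ⇑τ) := by
  obtain ⟨u, v, huv, rfl, rfl⟩ := id h
  exact ⟨u ∘ ⇑σ, v ∘ ⇑τ, (hB1 n hn).2.1 _ _ σ τ huv, rfl, rfl⟩

include hB2 in
lemma r2_trans {x y z : Fin n → Am B1 f₂} (h1 : R2 f₁ f₂ hn x y)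
    (h2 : R2 f₁ f₂ hn y z) : R2 f₁ f₂ hn x z := by
  obtain ⟨u, v, huv, rfl, rfl⟩ := id h1
  obtain ⟨u', v', hu'v', hy, rfl⟩ := id h2
  have hveq : v = u' := (g2_injective f₁ f₂).comp_left hy
  subst hveq
  exact ⟨u, v', (hB2 n hn).2.2.2.2 _ _ _ huv hu'v', rfl, rfl⟩

include hB2 in
lemma r2_symm {x y : Fin n → Am B1 f₂} (h : R2 f₁ f₂ hn x y) : R2 f₁ f₂ hn y x := by
  obtain ⟨u, v, huv, rfl, rfl⟩ := id h
  exact ⟨v, u, (hB2 n hn).2.2.2.1 _ _ huv, rfl, rfl⟩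

include hB2 in
lemma r2_perm {x y : Fin n → Am B1 f₂} (σ τ : Equiv.Perm (Fin n))
    (h : R2 f₁ f₂ hn x y) : R2 f₁ f₂ hn (x ∘ ⇑σ) (y ∘ ⇑τ) := by
  obtain ⟨u, v, huv, rfl, rfl⟩ := id h
  exact ⟨u ∘ ⇑σ, v ∘ ⇑τ, (hB2 n hn).2.1 _ _ σ τ huv, rfl, rfl⟩

lemma r1_iff {u v : Fin n → B1} :
    R1 (B1 := B1) f₂ hn (Sum.inl ∘ u) (Sum.inl ∘ v) ↔ ERel B1 n hn u v := by
  constructor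
  · rintro ⟨u', v', h, hu, hv⟩
    have hu' : u = u' := Sum.inl_injective.comp_left hu
    have hv' : v = v' := Sum.inl_injective.comp_left hv
    rw [hu', hv']; exact h
  · intro h; exact ⟨u, v, h, rfl, rfl⟩

lemma r2_iff {u v : Fin n → B2} :
    R2 f₁ f₂ hn (g2 f₁ f₂ ∘ u) (g2 f₁ f₂ ∘ v) ↔ ERel B2 n hn u v := by
  constructor
  · rintro ⟨u', v', h, hu, hv⟩
    have hu' : u = u' := (g2_injective f₁ f₂).comp_left hu
    have hv' : v = v' := (g2_injective f₁ f₂).comp_left hv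
    rw [hu', hv']; exact h
  · intro h; exact ⟨u, v, h, rfl, rfl⟩

/-- Transfer: an `R2`-link between two `B1`-tuples gives an `E₁`-relation. -/
lemma r2_to_r1 {u v : Fin n → B1}
    (h : R2 f₁ f₂ hn (Sum.inl ∘ u) (Sum.inl ∘ v)) : ERel B1 n hn u v := by
  obtain ⟨p, q, hpq, hx, hy⟩ := id h
  obtain ⟨a, hua, hpa⟩ := mixed_to_A f₁ f₂ hx
  obtain ⟨b, hvb, hqb⟩ := mixed_to_A f₁ f₂ hy
  subst hua hpa hvb hqb
  rw [ERel_map f₁]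
  rw [ERel_map f₂] at hpq
  exact hpq

lemma r1_to_r2 {u v : Fin n → B2}
    (h : R1 (B1 := B1) f₂ hn (g2 f₁ f₂ ∘ u) (g2 f₁ f₂ ∘ v)) : ERel B2 n hn u v := by
  obtain ⟨p, q, hpq, hx, hy⟩ := id h
  obtain ⟨a, hpa, hua⟩ := mixed_to_A f₁ f₂ hx.symm
  obtain ⟨b, hqb, hvb⟩ := mixed_to_A f₁ f₂ hy.symm
  subst hpa hua hqb hvb
  rw [ERel_map f₂]
  rw [ERel_map f₁] at hpq
  exact hpq

include hB1 hB2 in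
lemma sim_symm {x y : Fin n → Am B1 f₂} (h : SimA f₁ f₂ hn x y) : SimA f₁ f₂ hn y x := by
  rcases h with h | h | ⟨w, h1, h2⟩ | ⟨w, h1, h2⟩
  · exact Or.inl (r1_symm f₂ hn hB1 h)
  · exact Or.inr (Or.inl (r2_symm f₁ f₂ hn hB2 h))
  · exact Or.inr (Or.inr (Or.inr ⟨w, r2_symm f₁ f₂ hn hB2 h2, r1_symm f₂ hn hB1 h1⟩))
  · exact Or.inr (Or.inr (Or.inl ⟨w, r1_symm f₂ hn hB1 h2, r2_symm f₁ f₂ hn hB2 h1⟩))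

include hB1 hB2 in
lemma sim_perm {x y : Fin n → Am B1 f₂} (σ τ : Equiv.Perm (Fin n))
    (h : SimA f₁ f₂ hn x y) : SimA f₁ f₂ hn (x ∘ ⇑σ) (y ∘ ⇑τ) := by
  have hone : ∀ w : Fin n → Am B1 f₂, w ∘ ⇑(1 : Equiv.Perm (Fin n)) = w := fun w => rfl
  rcases h with h | h | ⟨w, h1, h2⟩ | ⟨w, h1, h2⟩
  · exact Or.inl (r1_perm f₂ hn hB1 σ τ h)
  · exact Or.inr (Or.inl (r2_perm f₁ f₂ hn hB2 σ τ h))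
  · refine Or.inr (Or.inr (Or.inl ⟨w, ?_, ?_⟩))
    · have := r1_perm f₂ hn hB1 σ 1 h1; rwa [hone] at this
    · have := r2_perm f₁ f₂ hn hB2 1 τ h2; rwa [hone] at this
  · refine Or.inr (Or.inr (Or.inr ⟨w, ?_, ?_⟩))
    · have := r2_perm f₁ f₂ hn hB2 σ 1 h1; rwa [hone] at this
    · have := r1_perm f₂ hn hB1 1 τ h2; rwa [hone] at this

include hA hB1 hB2 in
lemma sim_trans {x y z : Fin n → Am B1 f₂} (hxy : SimA f₁ f₂ hn x y)
    (hyz : SimA f₁ f₂ hn y z) : SimA f₁ f₂ hn x z := by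
  have T1 : ∀ {x y z : Fin n → Am B1 f₂}, R1 f₂ hn x y → R1 f₂ hn y z → R1 f₂ hn x z :=
    fun h h' => r1_trans f₂ hn hB1 h h'
  have T2 : ∀ {x y z : Fin n → Am B1 f₂}, R2 f₁ f₂ hn x y → R2 f₁ f₂ hn y z → R2 f₁ f₂ hn x z :=
    fun h h' => r2_trans f₁ f₂ hn hB2 h h'
  have H21 : ∀ {p q : Fin n → Am B1 f₂} {u v : Fin n → B1},
      R2 f₁ f₂ hn p q → p = Sum.inl ∘ u → q = Sum.inl ∘ v → R1 f₂ hn p q := by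
    intro p q u v h hp hq
    subst hp hq
    exact ⟨u, v, r2_to_r1 f₁ f₂ hn h, rfl, rfl⟩
  have H12 : ∀ {p q : Fin n → Am B1 f₂} {u v : Fin n → B2},
      R1 f₂ hn p q → p = g2 f₁ f₂ ∘ u → q = g2 f₁ f₂ ∘ v → R2 f₁ f₂ hn p q := by
    intro p q u v h hp hq
    subst hp hq
    exact ⟨u, v, r1_to_r2 f₁ f₂ hn h, rfl, rfl⟩
  rcases hxy with h | h | ⟨w, h1, h2⟩ | ⟨w, h1, h2⟩ <;>
    rcases hyz with h' | h' | ⟨w', h1', h2'⟩ | ⟨w', h1', h2'⟩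
  · exact Or.inl (T1 h h')
  · exact Or.inr (Or.inr (Or.inl ⟨y, h, h'⟩))
  · exact Or.inr (Or.inr (Or.inl ⟨w', T1 h h1', h2'⟩))
  · obtain ⟨_, v, _, _, hy⟩ := id h
    obtain ⟨u', _, _, hw, _⟩ := id h2'
    exact Or.inl (T1 (T1 h (H21 h1' hy hw)) h2')
  · exact Or.inr (Or.inr (Or.inr ⟨y, h, h'⟩))
  · exact Or.inr (Or.inl (T2 h h'))
  · obtain ⟨_, v, _, _, hy⟩ := id h
    obtain ⟨u', _, _, hw, _⟩ := id h2'
    exact Or.inr (Or.inl (T2 (T2 h (H12 h1' hy hw)) h2'))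
  · exact Or.inr (Or.inr (Or.inr ⟨w', T2 h h1', h2'⟩))
  · obtain ⟨_, v, _, _, hw⟩ := id h1
    obtain ⟨u', _, _, hy, _⟩ := id h'
    exact Or.inl (T1 (T1 h1 (H21 h2 hw hy)) h')
  · exact Or.inr (Or.inr (Or.inl ⟨w, h1, T2 h2 h'⟩))
  · obtain ⟨_, v, _, _, hw⟩ := id h1
    obtain ⟨u', _, _, hy, _⟩ := id h1'
    exact Or.inr (Or.inr (Or.inl ⟨w', T1 (T1 h1 (H21 h2 hw hy)) h1', h2'⟩))
  · obtain ⟨_, v, _, _, hw⟩ := id h1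
    obtain ⟨u', _, _, hw', _⟩ := id h2'
    exact Or.inl (T1 (T1 h1 (H21 (T2 h2 h1') hw hw')) h2')
  · exact Or.inr (Or.inr (Or.inr ⟨w, h1, T1 h2 h'⟩))
  · obtain ⟨_, v, _, _, hw⟩ := id h1
    obtain ⟨u', _, _, hy, _⟩ := id h'
    exact Or.inr (Or.inl (T2 (T2 h1 (H12 h2 hw hy)) h'))
  · obtain ⟨_, v, _, _, hw⟩ := id h1
    obtain ⟨u', _, _, hw', _⟩ := id h2'
    exact Or.inr (Or.inl (T2 (T2 h1 (H12 (T1 h2 h1') hw hw')) h2'))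
  · obtain ⟨_, v, _, _, hy⟩ := id h2
    obtain ⟨u', _, _, hw', _⟩ := id h2'
    exact Or.inr (Or.inr (Or.inr ⟨w, h1, T1 (T1 h2 (H21 h1' hy hw')) h2'⟩))

lemma ec_refl {x : Fin n → Am B1 f₂} (h : Function.Injective x) : EC f₁ f₂ hn x x :=
  ⟨⟨h, h⟩, Or.inl ⟨1, rfl⟩⟩

include hB1 hB2 in
lemma ec_symm {x y : Fin n → Am B1 f₂} (h : EC f₁ f₂ hn x y) : EC f₁ f₂ hn y x := by
  obtain ⟨⟨hx, hy⟩, hc⟩ := id h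
  refine ⟨⟨hy, hx⟩, ?_⟩
  rcases hc with ⟨σ, rfl⟩ | hs
  · refine Or.inl ⟨σ⁻¹, ?_⟩
    funext i
    simp
  · exact Or.inr (sim_symm f₁ f₂ hn hB1 hB2 hs)

include hB1 hB2 in
lemma ec_perm {x y : Fin n → Am B1 f₂} (σ τ : Equiv.Perm (Fin n))
    (h : EC f₁ f₂ hn x y) : EC f₁ f₂ hn (x ∘ ⇑σ) (y ∘ ⇑τ) := by
  obtain ⟨⟨hx, hy⟩, hc⟩ := id h
  refine ⟨⟨hx.comp σ.injective, hy.comp τ.injective⟩, ?_⟩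
  rcases hc with ⟨ρ, rfl⟩ | hs
  · refine Or.inl ⟨σ⁻¹ * (ρ * τ), ?_⟩
    funext i
    simp [Equiv.Perm.mul_apply]
  · exact Or.inr (sim_perm f₁ f₂ hn hB1 hB2 σ τ hs)

include hA hB1 hB2 in
lemma ec_trans {x y z : Fin n → Am B1 f₂} (h1 : EC f₁ f₂ hn x y)
    (h2 : EC f₁ f₂ hn y z) : EC f₁ f₂ hn x z := by
  obtain ⟨⟨hx, hy⟩, hc1⟩ := id h1
  obtain ⟨⟨hy', hz⟩, hc2⟩ := id h2
  refine ⟨⟨hx, hz⟩, ?_⟩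
  rcases hc1 with ⟨σ, rfl⟩ | hs1
  · rcases hc2 with ⟨τ, rfl⟩ | hs2
    · exact Or.inl ⟨σ * τ, funext fun i => rfl⟩
    · have := sim_perm f₁ f₂ hn hB1 hB2 σ⁻¹ 1 hs2
      have hxx : (x ∘ ⇑σ) ∘ ⇑σ⁻¹ = x := by funext i; simp
      rw [hxx] at this
      exact Or.inr this
  · rcases hc2 with ⟨τ, rfl⟩ | hs2
    · exact Or.inr (sim_perm f₁ f₂ hn hB1 hB2 1 τ hs1)
    · exact Or.inr (sim_trans f₁ f₂ hn hA hB1 hB2 hs1 hs2)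

/-! ### The structure on the amalgam -/

noncomputable def AmStructure : L₀.Structure (Am B1 f₂) where
  funMap := fun {m} f _ => nomatch f
  RelMap := fun {k} r x =>
    EC f₁ f₂ r.2.1
      (fun i => x (Fin.cast r.2.2.symm (Fin.castAdd r.1 i)))
      (fun i => x (Fin.cast r.2.2.symm (Fin.natAdd r.1 i)))

lemma erel_am (x y : Fin n → Am B1 f₂) :
    @ERel (Am B1 f₂) (AmStructure f₁ f₂) n hn x y ↔ EC f₁ f₂ hn x y := by
  show EC f₁ f₂ hn
      (fun i => Fin.append x y (Fin.cast rfl (Fin.castAdd n i)))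
      (fun i => Fin.append x y (Fin.cast rfl (Fin.natAdd n i))) ↔
    EC f₁ f₂ hn x y
  rw [half_left, half_right]

include hA hB1 hB2 in
lemma isK0_am : @IsK0Struct (Am B1 f₂) (AmStructure f₁ f₂) := by
  intro m hm
  refine ⟨?_, ?_, ?_, ?_, ?_⟩
  · intro x y h
    rw [erel_am] at h
    exact h.1
  · intro x y σ τ h
    rw [erel_am] at h ⊢
    exact ec_perm f₁ f₂ hm hB1 hB2 σ τ h
  · intro x h
    rw [erel_am]
    exact ec_refl f₁ f₂ hm h
  · intro x y h
    rw [erel_am] at h ⊢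
    exact ec_symm f₁ f₂ hm hB1 hB2 h
  · intro x y z h1 h2
    rw [erel_am] at h1 h2 ⊢
    exact ec_trans f₁ f₂ hm hA hB1 hB2 h1 h2

/-! ### The embedding conditions -/

include hB1 in
lemma ec_inl_iff {u v : Fin n → B1} :
    EC f₁ f₂ hn (Sum.inl ∘ u) (Sum.inl ∘ v) ↔ ERel B1 n hn u v := by
  constructor
  · rintro ⟨⟨hxinj, hyinj⟩, hc⟩
    have hu : Function.Injective u := fun i j hij => hxinj (congrArg Sum.inl hij)
    rcases hc with ⟨σ, hσ⟩ | hs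
    · have hv : v = u ∘ ⇑σ := Sum.inl_injective.comp_left hσ
      have h0 : ERel B1 n hn u u := (hB1 n hn).2.2.1 u hu
      have h1 := (hB1 n hn).2.1 u u 1 σ h0
      have hone : u ∘ ⇑(1 : Equiv.Perm (Fin n)) = u := rfl
      rw [hone] at h1
      rw [hv]
      exact h1
    · rcases hs with h | h | ⟨w, h1, h2⟩ | ⟨w, h1, h2⟩
      · exact (r1_iff f₂ hn).mp h
      · exact r2_to_r1 f₁ f₂ hn h
      · obtain ⟨p, q, hpq, hx, hw⟩ := id h1
        have hpu : p = u := Sum.inl_injective.comp_left hx.symm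
        subst hw
        have h2' : ERel B1 n hn q v := r2_to_r1 f₁ f₂ hn h2
        exact (hB1 n hn).2.2.2.2 _ _ _ (hpu ▸ hpq) h2'
      · obtain ⟨p, q, hpq, hw, hy⟩ := id h2
        have hqv : q = v := Sum.inl_injective.comp_left hy.symm
        subst hw
        have h1' : ERel B1 n hn u p := r2_to_r1 f₁ f₂ hn h1
        exact (hB1 n hn).2.2.2.2 _ _ _ h1' (hqv ▸ hpq)
  · intro h
    obtain ⟨hu, hv⟩ := (hB1 n hn).1 _ _ h
    exact ⟨⟨Sum.inl_injective.comp hu, Sum.inl_injective.comp hv⟩,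
      Or.inr (Or.inl ⟨u, v, h, rfl, rfl⟩)⟩

include hB2 in
lemma ec_g2_iff {u v : Fin n → B2} :
    EC f₁ f₂ hn (g2 f₁ f₂ ∘ u) (g2 f₁ f₂ ∘ v) ↔ ERel B2 n hn u v := by
  constructor
  · rintro ⟨⟨hxinj, hyinj⟩, hc⟩
    have hu : Function.Injective u := fun i j hij => hxinj (congrArg (g2 f₁ f₂) hij)
    rcases hc with ⟨σ, hσ⟩ | hs
    · have hv : v = u ∘ ⇑σ := (g2_injective f₁ f₂).comp_left hσ
      have h0 : ERel B2 n hn u u := (hB2 n hn).2.2.1 u hu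
      have h1 := (hB2 n hn).2.1 u u 1 σ h0
      have hone : u ∘ ⇑(1 : Equiv.Perm (Fin n)) = u := rfl
      rw [hone] at h1
      rw [hv]
      exact h1
    · rcases hs with h | h | ⟨w, h1, h2⟩ | ⟨w, h1, h2⟩
      · exact r1_to_r2 f₁ f₂ hn h
      · exact (r2_iff f₁ f₂ hn).mp h
      · obtain ⟨p, q, hpq, hw, hy⟩ := id h2
        have hqv : q = v := (g2_injective f₁ f₂).comp_left hy.symm
        subst hw
        have h1' : ERel B2 n hn u p := r1_to_r2 f₁ f₂ hn h1
        exact (hB2 n hn).2.2.2.2 _ _ _ h1' (hqv ▸ hpq)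
      · obtain ⟨p, q, hpq, hx, hw⟩ := id h1
        have hpu : p = u := (g2_injective f₁ f₂).comp_left hx.symm
        subst hw
        have h2' : ERel B2 n hn q v := r1_to_r2 f₁ f₂ hn h2
        exact (hB2 n hn).2.2.2.2 _ _ _ (hpu ▸ hpq) h2'
  · intro h
    obtain ⟨hu, hv⟩ := (hB2 n hn).1 _ _ h
    exact ⟨⟨(g2_injective f₁ f₂).comp hu, (g2_injective f₁ f₂).comp hv⟩,
      Or.inr (Or.inr (Or.inl ⟨u, v, h, rfl, rfl⟩))⟩

noncomputable def emb1 (hB1' : IsK0Struct B1) :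
    @Language.Embedding L₀ B1 (Am B1 f₂) _ (AmStructure f₁ f₂) := by
  letI := AmStructure f₁ f₂
  exact
  { toFun := Sum.inl
    inj' := Sum.inl_injective
    map_fun' := fun {m} f x => nomatch f
    map_rel' := by
      intro k r x
      obtain ⟨m, hm, hk⟩ := r
      rw [relMap_halves hm hk, relMap_halves hm hk]
      have h1 : (fun i => ((Sum.inl : B1 → Am B1 f₂) ∘ x) (Fin.cast hk.symm (Fin.castAdd m i))) =
          (Sum.inl : B1 → Am B1 f₂) ∘ (fun i => x (Fin.cast hk.symm (Fin.castAdd m i))) := rfl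
      have h2 : (fun i => ((Sum.inl : B1 → Am B1 f₂) ∘ x) (Fin.cast hk.symm (Fin.natAdd m i))) =
          (Sum.inl : B1 → Am B1 f₂) ∘ (fun i => x (Fin.cast hk.symm (Fin.natAdd m i))) := rfl
      refine (erel_am f₁ f₂ hm _ _).trans ?_
      exact ec_inl_iff f₁ f₂ hm hB1' }

noncomputable def emb2 (hB2' : IsK0Struct B2) :
    @Language.Embedding L₀ B2 (Am B1 f₂) _ (AmStructure f₁ f₂) := by
  letI := AmStructure f₁ f₂
  exact
  { toFun := g2 f₁ f₂
    inj' := g2_injective f₁ f₂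
    map_fun' := fun {m} f x => nomatch f
    map_rel' := by
      intro k r x
      obtain ⟨m, hm, hk⟩ := r
      rw [relMap_halves hm hk, relMap_halves hm hk]
      have h1 : (fun i => (g2 f₁ f₂ ∘ x) (Fin.cast hk.symm (Fin.castAdd m i))) =
          g2 f₁ f₂ ∘ (fun i => x (Fin.cast hk.symm (Fin.castAdd m i))) := rfl
      have h2 : (fun i => (g2 f₁ f₂ ∘ x) (Fin.cast hk.symm (Fin.natAdd m i))) =
          g2 f₁ f₂ ∘ (fun i => x (Fin.cast hk.symm (Fin.natAdd m i))) := rfl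
      rw [h1, h2, erel_am]
      exact ec_g2_iff f₁ f₂ hm hB2' }

end Amalg

/-- `K₀` has the amalgamation property. -/
theorem K0_amalgamation :
    ∀ (A B₁ B₂ : Bundled L₀.Structure) (f₁ : A ↪[L₀] B₁) (f₂ : A ↪[L₀] B₂),
      A ∈ K₀ → B₁ ∈ K₀ → B₂ ∈ K₀ →
        ∃ (C : Bundled L₀.Structure) (g₁ : B₁ ↪[L₀] C) (g₂ : B₂ ↪[L₀] C),
          C ∈ K₀ ∧ g₁.comp f₁ = g₂.comp f₂ := by
  intro A B₁ B₂ f₁ f₂ hA hB₁ hB₂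
  obtain ⟨hAfin, hAstr⟩ := hA
  obtain ⟨hB1fin, hB1str⟩ := hB₁
  obtain ⟨hB2fin, hB2str⟩ := hB₂
  letI instAm := AmStructure f₁ f₂
  haveI : Finite (↑B₁) := hB1fin
  haveI : Finite (↑B₂) := hB2fin
  haveI : Finite (Am (↑B₁) f₂) := by
    unfold Am
    infer_instance
  obtain ⟨m, ⟨e₀⟩⟩ := Finite.exists_equiv_fin (Am (↑B₁) f₂)
  let e : Am (↑B₁) f₂ ≃ ULift (Fin m) := e₀.trans Equiv.ulift.symm
  letI instC : L₀.Structure (ULift (Fin m)) := Equiv.inducedStructure e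
  let eqv : @Language.Equiv L₀ (Am (↑B₁) f₂) (ULift (Fin m)) instAm instC :=
    Equiv.inducedStructureEquiv e
  refine ⟨@Bundled.of L₀.Structure (ULift (Fin m)) instC,
    eqv.toEmbedding.comp (emb1 f₁ f₂ hB1str), eqv.toEmbedding.comp (emb2 f₁ f₂ hB2str),
    ⟨?_, ?_⟩, ?_⟩
  · exact Finite.of_equiv _ e
  · exact isK0Struct_equiv eqv (isK0_am f₁ f₂ hAstr hB1str hB2str)
  · apply Language.Embedding.ext
    intro a
    show eqv (Sum.inl (f₁ a)) = eqv (g2 f₁ f₂ (f₂ a))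
    rw [g2_f₂]
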